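/- Let p ∈ (0,1) and let α, β be real numbers with α ≤ 1 and 1 + β > 0. Then the relative latency RelLat_k = (β + α + (1 − α)·(1 − p)/(1 − p^k))/(1 + β) is nonincreasing in the window size: for every natural number k ≥ 1, RelLat_{k+1} ≤ RelLat_k. -/
import Mathlib


/-- **Relative latency is nonincreasing in the window size.**
For `p ∈ (0,1)`, `α ≤ 1`, `1 + β > 0`, the bounded-window relative latency
`RelLat_k = (β + α + (1−α)(1−p)/(1−p^k))/(1+β)` satisfies
`RelLat_{k+1} ≤ RelLat_k` for every `k ≥ 1`. -/
theorem relative_latency_antitone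
    (p α β : ℝ) (hp : p ∈ Set.Ioo (0 : ℝ) 1) (hα : α ≤ 1) (hβ : 0 < 1 + β) :
    ∀ k : ℕ, 1 ≤ k →
      (β + α + (1 - α) * (1 - p) / (1 - p ^ (k + 1))) / (1 + β)
        ≤ (β + α + (1 - α) * (1 - p) / (1 - p ^ k)) / (1 + β) := by
  intro k hk
  obtain ⟨hp0, hp1⟩ := hp
  have hpk : ∀ n : ℕ, p ^ n ≤ 1 := fun n => pow_le_one₀ hp0.le hp1.le
  have hkpos : (0:ℝ) < 1 - p ^ k := by
    have : p ^ k < 1 := pow_lt_one₀ hp0.le hp1 (by omega)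
    linarith
  have hk1pos : (0:ℝ) < 1 - p ^ (k + 1) := by
    have : p ^ (k+1) < 1 := pow_lt_one₀ hp0.le hp1 (by omega)
    linarith
  have hmono : 1 - p ^ k ≤ 1 - p ^ (k + 1) := by
    have : p ^ (k+1) ≤ p ^ k := pow_le_pow_of_le_one hp0.le hp1.le (by omega)
    linarith
  have hnum : (0:ℝ) ≤ (1 - α) * (1 - p) := by nlinarith
  have := div_le_div_of_nonneg_left hnum hkpos hmono
  gcongr
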